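/- arXiv:2004.04021 — 3 statements merged into one kernel-verified Lean document; each statement's English description precedes it below -/
import Mathlib

section
/- Let n ≥ 1 and let F : Matrix (Fin n) (Fin n) ℝ → ℝ be a polynomial function of the matrix entries (i.e. there is a multivariate polynomial P over ℝ in the n² entry-variables with F(A) = P evaluated at the entries of A for every A). Suppose F is invariant under orthogonal conjugation on symmetric matrices: F(Bᵀ A B) = F(A) for every symmetric matrix A (Aᵀ = A) and every orthogonal matrix B (Bᵀ B = 1). Then there exists a multivariate polynomial Q over ℝ in n variables such that for every symmetric matrix A one has F(A) = Q(tr(A), tr(A²), …, tr(Aⁿ)). -/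
open Matrix

namespace Stmt4Aux

open MvPolynomial Finset

/-- Permutation matrix for `e`. -/
noncomputable def permMat {n : ℕ} (e : Equiv.Perm (Fin n)) : Matrix (Fin n) (Fin n) ℝ :=
  Matrix.of fun i j => if e j = i then 1 else 0

lemma permMat_orth {n : ℕ} (e : Equiv.Perm (Fin n)) : (permMat e)ᵀ * permMat e = 1 := by
  ext j k
  simp only [Matrix.mul_apply, Matrix.transpose_apply, permMat, Matrix.of_apply]
  rw [Finset.sum_eq_single (e j)]
  · simp [Matrix.one_apply, Equiv.apply_eq_iff_eq, eq_comm]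
  · intro b _ hb
    simp [(by simpa [eq_comm] using hb : ¬ e j = b)]
  · simp

lemma permMat_conj {n : ℕ} (e : Equiv.Perm (Fin n)) (x : Fin n → ℝ) :
    (permMat e)ᵀ * Matrix.diagonal x * permMat e = Matrix.diagonal (x ∘ e) := by
  ext j k
  simp only [Matrix.mul_apply, Matrix.transpose_apply, permMat, Matrix.of_apply,
    Matrix.diagonal_apply, Finset.sum_ite_eq, Finset.mem_univ, if_true]
  rw [Finset.sum_eq_single (e j)]
  · by_cases h : j = k <;> simp [h, Equiv.apply_eq_iff_eq, eq_comm, Function.comp]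
  · intro b _ hb
    simp [(by simpa [eq_comm] using hb : ¬ e j = b)]
  · simp

/-- Each elementary symmetric polynomial of degree `≤ n` lies in the subalgebra generated by
the power sums `psum (i+1)`, `i : Fin n`. -/
lemma esymm_mem {n : ℕ} (k : ℕ) (hk : k ≤ n) :
    esymm (Fin n) ℝ k ∈
      (aeval (fun i : Fin n => psum (Fin n) ℝ ((i : ℕ) + 1)) :
        MvPolynomial (Fin n) ℝ →ₐ[ℝ] MvPolynomial (Fin n) ℝ).range := by
  induction k using Nat.strong_induction_on with
  | _ k ih =>
    rcases Nat.eq_zero_or_pos k with rfl | hkpos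
    · rw [esymm_zero]; exact Subalgebra.one_mem _
    have hNewton := mul_esymm_eq_sum (Fin n) ℝ k
    have hkR : (k : ℝ) ≠ 0 := Nat.cast_ne_zero.mpr hkpos.ne'
    have hCk : (k : MvPolynomial (Fin n) ℝ) = C (k : ℝ) := by
      simp
    have : esymm (Fin n) ℝ k = (k : ℝ)⁻¹ • ((k : MvPolynomial (Fin n) ℝ) * esymm (Fin n) ℝ k) := by
      rw [hCk, ← smul_eq_C_mul, smul_smul, inv_mul_cancel₀ hkR, one_smul]
    rw [this, hNewton]
    refine Subalgebra.smul_mem _ (Subalgebra.mul_mem _ ?_ (Subalgebra.sum_mem _ ?_)) _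
    · exact Subalgebra.pow_mem _ (Subalgebra.neg_mem _ (Subalgebra.one_mem _)) _
    intro a ha
    rw [Finset.mem_filter, Finset.HasAntidiagonal.mem_antidiagonal] at ha
    obtain ⟨hsum, hlt⟩ := ha
    refine Subalgebra.mul_mem _ (Subalgebra.mul_mem _ ?_ (ih a.1 hlt (hlt.le.trans hk))) ?_
    · exact Subalgebra.pow_mem _ (Subalgebra.neg_mem _ (Subalgebra.one_mem _)) _
    · have h2pos : 0 < a.2 := by omega
      have h2le : a.2 - 1 < n := by omega
      refine ⟨X ⟨a.2 - 1, h2le⟩, ?_⟩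
      simp only [AlgHom.toRingHom_eq_coe, RingHom.coe_coe, aeval_X]
      congr 1
      omega

lemma eval_eq_aeval {υ : Type*} (y : υ → ℝ) (q : MvPolynomial υ ℝ) :
    eval y q = aeval y q := by
  rw [← coe_aeval_eq_eval]; rfl

lemma eval_aeval' {σ τ : Type*} (x : τ → ℝ) (g : σ → MvPolynomial τ ℝ)
    (p : MvPolynomial σ ℝ) :
    eval x (aeval g p) = eval (fun i => eval x (g i)) p := by
  have h2 : (fun i => aeval x (g i)) = fun i => eval x (g i) :=
    funext fun i => (eval_eq_aeval x (g i)).symm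
  rw [eval_eq_aeval x, ← AlgHom.comp_apply, comp_aeval, h2]
  exact (eval_eq_aeval _ p).symm

end Stmt4Aux

/-- a polynomial function of matrix entries invariant under orthogonal
conjugation on symmetric matrices is a polynomial in the traces of powers. -/
theorem stmt_4 (n : ℕ) (hn : 1 ≤ n) (F : Matrix (Fin n) (Fin n) ℝ → ℝ)
    (P : MvPolynomial (Fin n × Fin n) ℝ)
    (hF : ∀ A : Matrix (Fin n) (Fin n) ℝ,
      F A = MvPolynomial.eval (fun p : Fin n × Fin n => A p.1 p.2) P)
    (hinv : ∀ A B : Matrix (Fin n) (Fin n) ℝ, Aᵀ = A → Bᵀ * B = 1 →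
      F (Bᵀ * A * B) = F A) :
    ∃ Q : MvPolynomial (Fin n) ℝ, ∀ A : Matrix (Fin n) (Fin n) ℝ, Aᵀ = A →
      F A = MvPolynomial.eval (fun i : Fin n => (A ^ ((i : ℕ) + 1)).trace) Q := by
  classical
  open MvPolynomial Stmt4Aux in
  -- the polynomial giving `F` on diagonal matrices
  set G : MvPolynomial (Fin n) ℝ :=
    aeval (fun p : Fin n × Fin n => if p.1 = p.2 then X p.1 else (0 : MvPolynomial (Fin n) ℝ)) P
    with hG
  have hGeval : ∀ x : Fin n → ℝ, eval x G = F (Matrix.diagonal x) := by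
    intro x
    rw [hG, eval_aeval', hF]
    have : (fun p : Fin n × Fin n => eval x
        (if p.1 = p.2 then X p.1 else (0 : MvPolynomial (Fin n) ℝ))) =
        fun p : Fin n × Fin n => Matrix.diagonal x p.1 p.2 := by
      funext p
      by_cases h : p.1 = p.2 <;> simp [h, Matrix.diagonal_apply]
    rw [this]
  -- G is symmetric
  have hGsymm : G.IsSymmetric := by
    intro e
    apply MvPolynomial.funext
    intro x
    rw [eval_rename, hGeval, hGeval, ← permMat_conj e x]
    exact hinv _ _ (Matrix.diagonal_transpose x) (permMat_orth e)
  -- express G via elementary symmetric polynomials, then via power sums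
  obtain ⟨R₀, hR₀⟩ := esymmAlgHom_surjective (σ := Fin n) (R := ℝ)
    (by simp : Fintype.card (Fin n) ≤ n) ⟨G, hGsymm⟩
  have hR₀' : aeval (fun i : Fin n => esymm (Fin n) ℝ ((i : ℕ) + 1)) R₀ = G := by
    have := congrArg Subtype.val hR₀
    rwa [esymmAlgHom_apply] at this
  have hGmem : G ∈ (aeval (fun i : Fin n => psum (Fin n) ℝ ((i : ℕ) + 1)) :
      MvPolynomial (Fin n) ℝ →ₐ[ℝ] MvPolynomial (Fin n) ℝ).range := by
    rw [← hR₀']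
    have key : ∀ p : MvPolynomial (Fin n) ℝ,
        aeval (fun i : Fin n => esymm (Fin n) ℝ ((i : ℕ) + 1)) p ∈
        (aeval (fun i : Fin n => psum (Fin n) ℝ ((i : ℕ) + 1)) :
          MvPolynomial (Fin n) ℝ →ₐ[ℝ] MvPolynomial (Fin n) ℝ).range := by
      intro p
      induction p using MvPolynomial.induction_on with
      | C r => rw [aeval_C]; exact Subalgebra.algebraMap_mem _ _
      | add p q hp hq => rw [_root_.map_add]; exact Subalgebra.add_mem _ hp hq
      | mul_X p i hp =>
        rw [_root_.map_mul, aeval_X]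
        exact Subalgebra.mul_mem _ hp (esymm_mem _ i.isLt.nat_succ_le)
    exact key R₀
  obtain ⟨Q, hQ⟩ := hGmem
  have hQ' : aeval (fun i : Fin n => psum (Fin n) ℝ ((i : ℕ) + 1)) Q = G := hQ
  refine ⟨Q, fun A hA => ?_⟩
  -- spectral theorem
  have hAh : A.IsHermitian := by
    rwa [Matrix.IsHermitian, Matrix.conjTranspose_eq_transpose_of_trivial]
  have hspec := hAh.spectral_theorem
  set U : Matrix (Fin n) (Fin n) ℝ := (Matrix.IsHermitian.eigenvectorUnitary hAh : Matrix (Fin n) (Fin n) ℝ) with hU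
  set D : Matrix (Fin n) (Fin n) ℝ := Matrix.diagonal hAh.eigenvalues with hD
  have hDiag : Matrix.diagonal (RCLike.ofReal ∘ hAh.eigenvalues) = D := by
    rw [hD]; congr 1
  have hspec' : A = U * D * Uᵀ := by
    rw [hspec, hDiag, Unitary.conjStarAlgAut_apply, Matrix.star_eq_conjTranspose,
      Matrix.conjTranspose_eq_transpose_of_trivial]
  have hUorth : U * Uᵀ = 1 := by
    have := (Matrix.mem_unitaryGroup_iff).mp (Matrix.IsHermitian.eigenvectorUnitary hAh).2
    rwa [Matrix.star_eq_conjTranspose, Matrix.conjTranspose_eq_transpose_of_trivial] at this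
  have hUorth' : Uᵀ * U = 1 := by
    have := (Matrix.mem_unitaryGroup_iff').mp (Matrix.IsHermitian.eigenvectorUnitary hAh).2
    rwa [Matrix.star_eq_conjTranspose, Matrix.conjTranspose_eq_transpose_of_trivial] at this
  -- F A = F D
  have hFA : F A = F D := by
    have : F ((Uᵀ)ᵀ * D * Uᵀ) = F D :=
      hinv D (Uᵀ) (Matrix.diagonal_transpose _) (by rwa [Matrix.transpose_transpose])
    rw [hspec']
    rwa [Matrix.transpose_transpose] at this
  -- traces of powers agree
  have hAU : A * U = U * D := by
    rw [hspec', mul_assoc (U * D), hUorth', mul_one]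
  have hpow : ∀ k : ℕ, A ^ k * U = U * D ^ k := by
    intro k
    induction k with
    | zero => simp
    | succ k ihk =>
      rw [pow_succ, pow_succ, mul_assoc, hAU, ← mul_assoc, ihk, mul_assoc]
  have htr : ∀ k : ℕ, (A ^ k).trace = (D ^ k).trace := by
    intro k
    have : A ^ k = U * D ^ k * Uᵀ := by
      rw [← hpow k, mul_assoc, hUorth, mul_one]
    rw [this, Matrix.trace_mul_comm, ← mul_assoc, hUorth', one_mul]
  -- evaluate
  have hDtr : ∀ k : ℕ, (D ^ k).trace = ∑ j, hAh.eigenvalues j ^ k := by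
    intro k
    rw [hD, Matrix.diagonal_pow, Matrix.trace_diagonal]
    simp [Pi.pow_apply]
  calc F A = F D := hFA
    _ = eval hAh.eigenvalues G := (hGeval _).symm
    _ = MvPolynomial.eval (fun i : Fin n => (A ^ ((i : ℕ) + 1)).trace) Q := by
        rw [← hQ', eval_aeval']
        have hfun : (fun i : Fin n => eval hAh.eigenvalues (psum (Fin n) ℝ ((i : ℕ) + 1))) =
            fun i : Fin n => (A ^ ((i : ℕ) + 1)).trace := by
          funext i
          rw [htr, hDtr]
          simp [psum]
        rw [hfun]
end

section
/- Let n ≥ 2 and let F : Matrix (Fin n) (Fin n) ℝ → ℝ be a polynomial function of the matrix entries. Suppose F is invariant under orthogonal conjugation on traceless symmetric matrices: F(Bᵀ A B) = F(A) for every symmetric matrix A (Aᵀ = A) with tr(A) = 0 and every orthogonal matrix B (Bᵀ B = 1). Then there exists a multivariate polynomial Q over ℝ in n − 1 variables such that for every symmetric matrix A with tr(A) = 0 one has F(A) = Q(tr(A²), tr(A³), …, tr(Aⁿ)). -/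
open Matrix

open MvPolynomial


lemma aux_eval_aeval {σ τ : Type*} (f : σ → MvPolynomial τ ℝ)
    (p : MvPolynomial σ ℝ) (v : τ → ℝ) :
    eval v (aeval f p) = eval (fun i => eval v (f i)) p := by
  induction p using MvPolynomial.induction_on with
  | C a => simp
  | add p q hp hq => rw [map_add, map_add (eval v), hp, hq, map_add]
  | mul_X p i hp =>
      rw [_root_.map_mul, _root_.map_mul (eval v), hp, aeval_X,
        _root_.map_mul, eval_X]

lemma aux_esymm_mem (n k : ℕ) :
    esymm (Fin n) ℝ k ∈
      Algebra.adjoin ℝ (Set.range fun i : Fin n => psum (Fin n) ℝ ((i : ℕ) + 1)) := by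
  induction k using Nat.strong_induction_on with
  | _ k ih =>
  rcases Nat.eq_zero_or_pos k with rfl | hk
  · rw [esymm_zero]; exact Subalgebra.one_mem _
  rcases le_or_gt k n with hkn | hkn
  · have h := mul_esymm_eq_sum (Fin n) ℝ k
    have hk0 : (k : ℝ) ≠ 0 := Nat.cast_ne_zero.mpr hk.ne'
    have hCk : (k : MvPolynomial (Fin n) ℝ) = C (k : ℝ) := by
      simp [MvPolynomial.C_eq_coe_nat]
    have heq : esymm (Fin n) ℝ k
        = C ((k : ℝ)⁻¹) * ((k : MvPolynomial (Fin n) ℝ) * esymm (Fin n) ℝ k) := by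
      rw [hCk, ← mul_assoc, ← C_mul, inv_mul_cancel₀ hk0, C_1, one_mul]
    rw [heq, h]
    refine Subalgebra.mul_mem _ ?_ (Subalgebra.mul_mem _ ?_ (Subalgebra.sum_mem _ ?_))
    · simpa [← MvPolynomial.algebraMap_eq] using Subalgebra.algebraMap_mem (Algebra.adjoin ℝ (Set.range fun i : Fin n => psum (Fin n) ℝ ((i : ℕ) + 1))) ((k:ℝ)⁻¹)
    · exact Subalgebra.pow_mem _ (Subalgebra.neg_mem _ (Subalgebra.one_mem _)) _
    · intro a ha
      simp only [Finset.mem_filter, Finset.mem_antidiagonal] at ha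
      have hs : a.1 + a.2 = k := Finset.HasAntidiagonal.mem_antidiagonal.mp ha.1
      refine Subalgebra.mul_mem _ (Subalgebra.mul_mem _
        (Subalgebra.pow_mem _ (Subalgebra.neg_mem _ (Subalgebra.one_mem _)) _)
        (ih a.1 ha.2)) ?_
      have h1 : 1 ≤ a.2 := by omega
      have h2 : a.2 - 1 < n := by omega
      have : ((⟨a.2 - 1, h2⟩ : Fin n) : ℕ) + 1 = a.2 := by simp; omega
      refine Algebra.subset_adjoin ⟨⟨a.2 - 1, h2⟩, ?_⟩
      show psum (Fin n) ℝ _ = _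
      rw [this]
  · have : esymm (Fin n) ℝ k = 0 := by
      rw [esymm, Finset.powersetCard_eq_empty.mpr (by simpa using hkn), Finset.sum_empty]
    rw [this]; exact Subalgebra.zero_mem _

lemma aux_symm_rep {n : ℕ} (g : MvPolynomial (Fin n) ℝ) (hg : g.IsSymmetric) :
    ∃ R : MvPolynomial (Fin n) ℝ,
      g = aeval (fun i : Fin n => psum (Fin n) ℝ ((i : ℕ) + 1)) R := by
  obtain ⟨q, hq⟩ := esymmAlgHom_surjective (σ := Fin n) (R := ℝ) (n := n) (by simp) ⟨g, hg⟩
  have hgr : g ∈ Algebra.adjoin ℝ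
      (Set.range fun i : Fin n => esymm (Fin n) ℝ ((i : ℕ) + 1)) := by
    rw [Algebra.adjoin_range_eq_range_aeval]
    have h2 := congrArg Subtype.val hq
    rw [esymmAlgHom_apply] at h2
    exact ⟨q, h2⟩
  have hle : Algebra.adjoin ℝ (Set.range fun i : Fin n => esymm (Fin n) ℝ ((i : ℕ) + 1)) ≤
      Algebra.adjoin ℝ (Set.range fun i : Fin n => psum (Fin n) ℝ ((i : ℕ) + 1)) := by
    rw [Algebra.adjoin_le_iff]
    rintro _ ⟨i, rfl⟩
    exact aux_esymm_mem n _
  have := hle hgr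
  rw [Algebra.adjoin_range_eq_range_aeval] at this
  obtain ⟨R, hR⟩ := this
  exact ⟨R, hR.symm⟩

lemma aux_conj_pow {n : ℕ} (B D : Matrix (Fin n) (Fin n) ℝ) (hB : Bᵀ * B = 1) (k : ℕ) :
    (Bᵀ * D * B) ^ k = Bᵀ * D ^ k * B := by
  have hB' : B * Bᵀ = 1 := mul_eq_one_comm.mp hB
  induction k with
  | zero => simp [hB]
  | succ k ih =>
      rw [pow_succ, pow_succ, ih]
      calc Bᵀ * D ^ k * B * (Bᵀ * D * B)
          = Bᵀ * D ^ k * (B * Bᵀ) * (D * B) := by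
            simp only [Matrix.mul_assoc]
        _ = Bᵀ * (D ^ k * D) * B := by rw [hB']; simp only [Matrix.mul_assoc, Matrix.mul_one]
        _ = Bᵀ * (D ^ k * D) * B := rfl

lemma aux_perm_orth {n : ℕ} (σ : Equiv.Perm (Fin n)) :
    (σ.permMatrix ℝ)ᵀ * σ.permMatrix ℝ = 1 := by
  rw [← PEquiv.toMatrix_symm, ← Equiv.toPEquiv_symm, ← PEquiv.toMatrix_trans,
    ← Equiv.toPEquiv_trans]
  simp

lemma aux_perm_diag {n : ℕ} (σ : Equiv.Perm (Fin n)) (u : Fin n → ℝ) :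
    (σ.permMatrix ℝ)ᵀ * diagonal u * σ.permMatrix ℝ = diagonal (u ∘ ⇑σ.symm) := by
  rw [← PEquiv.toMatrix_symm, ← Equiv.toPEquiv_symm]
  rw [PEquiv.toMatrix_toPEquiv_mul]
  rw [PEquiv.mul_toMatrix_toPEquiv]
  ext i j
  by_cases h : i = j <;> simp [submatrix_apply, diagonal_apply, h, Equiv.symm_apply_eq]


/-- a polynomial function of matrix entries invariant under orthogonal
conjugation on traceless symmetric matrices is a polynomial in
`tr(A²), …, tr(Aⁿ)`. -/
theorem stmt_5 (n : ℕ) (hn : 2 ≤ n) (F : Matrix (Fin n) (Fin n) ℝ → ℝ)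
    (P : MvPolynomial (Fin n × Fin n) ℝ)
    (hF : ∀ A : Matrix (Fin n) (Fin n) ℝ,
      F A = MvPolynomial.eval (fun p : Fin n × Fin n => A p.1 p.2) P)
    (hinv : ∀ A B : Matrix (Fin n) (Fin n) ℝ, Aᵀ = A → A.trace = 0 → Bᵀ * B = 1 →
      F (Bᵀ * A * B) = F A) :
    ∃ Q : MvPolynomial (Fin (n - 1)) ℝ, ∀ A : Matrix (Fin n) (Fin n) ℝ,
      Aᵀ = A → A.trace = 0 →
      F A = MvPolynomial.eval (fun i : Fin (n - 1) => (A ^ ((i : ℕ) + 2)).trace) Q := by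
  classical
  have hn0 : (n : ℝ) ≠ 0 := Nat.cast_ne_zero.mpr (by omega)
  set g : MvPolynomial (Fin n) ℝ :=
    aeval (fun p : Fin n × Fin n =>
      if p.1 = p.2 then (X p.1 : MvPolynomial (Fin n) ℝ) else 0) P with hgdef
  have hgeval : ∀ v : Fin n → ℝ, eval v g = F (diagonal v) := by
    intro v
    have hfun : (fun p : Fin n × Fin n => eval v
        (if p.1 = p.2 then (X p.1 : MvPolynomial (Fin n) ℝ) else 0))
        = fun p : Fin n × Fin n => diagonal v p.1 p.2 := by
      funext p
      by_cases h : p.1 = p.2 <;> simp [diagonal_apply, h]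
    rw [hgdef, aux_eval_aeval, hF]
    exact congrArg (fun f => eval f P) hfun
  set gh : MvPolynomial (Fin n) ℝ :=
    aeval (fun i : Fin n =>
      (X i : MvPolynomial (Fin n) ℝ) - C ((n:ℝ)⁻¹) * ∑ j, X j) g with hghdef
  have hgheval : ∀ v : Fin n → ℝ,
      eval v gh = F (diagonal (fun i => v i - (n:ℝ)⁻¹ * ∑ j, v j)) := by
    intro v
    have hw : (fun i => eval v
        ((X i : MvPolynomial (Fin n) ℝ) - C ((n:ℝ)⁻¹) * ∑ j, X j))
        = fun i => v i - (n:ℝ)⁻¹ * ∑ j, v j := by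
      funext i; simp
    rw [hghdef, aux_eval_aeval, hw, hgeval]
  have hsymm : gh.IsSymmetric := by
    intro e
    apply MvPolynomial.funext
    intro v
    rw [eval_rename, hgheval, hgheval]
    have hsum : ∑ j, v (e j) = ∑ j, v j := Equiv.sum_comp e v
    set w : Fin n → ℝ := fun i => v i - (n:ℝ)⁻¹ * ∑ j, v j with hwdef
    have hweq : (fun i => (v ∘ e) i - (n:ℝ)⁻¹ * ∑ j, (v ∘ e) j) = w ∘ e := by
      funext i
      simp only [Function.comp_apply, hwdef, hsum]
    rw [hweq]
    have hdg : diagonal (w ∘ ⇑e) = (Equiv.Perm.permMatrix ℝ e.symm)ᵀ * diagonal w * Equiv.Perm.permMatrix ℝ e.symm := by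
      rw [aux_perm_diag e.symm w, Equiv.symm_symm]
    have htr : (diagonal w).trace = 0 := by
      rw [trace_diagonal, hwdef]
      rw [Finset.sum_sub_distrib, Finset.sum_const, Finset.card_univ, Fintype.card_fin]
      rw [nsmul_eq_mul, ← mul_assoc, mul_inv_cancel₀ hn0, one_mul, sub_self]
    rw [hdg]
    exact hinv (diagonal w) (Equiv.Perm.permMatrix ℝ e.symm) (diagonal_transpose w) htr
      (aux_perm_orth e.symm)
  obtain ⟨R, hR⟩ := aux_symm_rep gh hsymm
  refine ⟨aeval (fun i : Fin n =>
      if h : (i : ℕ) = 0 then 0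
      else X (⟨(i : ℕ) - 1, by have := i.2; omega⟩ : Fin (n - 1))) R, ?_⟩
  intro A hAs hAtr
  have hAh : A.IsHermitian := by
    rw [Matrix.IsHermitian, conjTranspose_eq_transpose_of_trivial, hAs]
  set B : Matrix (Fin n) (Fin n) ℝ :=
    (hAh.eigenvectorUnitary : Matrix (Fin n) (Fin n) ℝ) with hBdef
  set lam := hAh.eigenvalues with hlam
  have hstar : star B = Bᵀ := by
    rw [Matrix.star_eq_conjTranspose, conjTranspose_eq_transpose_of_trivial]
  have hBo : Bᵀ * B = 1 := by
    rw [← hstar]; exact (Unitary.mem_iff.mp hAh.eigenvectorUnitary.2).1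
  have hBo' : B * Bᵀ = 1 := mul_eq_one_comm.mp hBo
  have hdiag : Bᵀ * A * B = diagonal lam := by
    have h := hAh.conjStarAlgAut_star_eigenvectorUnitary
    rw [Unitary.conjStarAlgAut_star_apply, hstar] at h
    rw [h]
    congr 1
  have hFA : F A = F (diagonal lam) := by
    rw [← hdiag]
    exact (hinv A B hAs hAtr hBo).symm
  have htrl : (diagonal lam).trace = 0 := by
    rw [← hdiag, trace_mul_cycle, hBo', Matrix.one_mul, hAtr]
  have hsum : ∑ i, lam i = 0 := by
    simpa [trace_diagonal] using htrl
  have hpow : ∀ k : ℕ, (A ^ k).trace = ∑ i, lam i ^ k := by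
    intro k
    have hA' : A = B * diagonal lam * Bᵀ := by
      rw [← hdiag]
      calc A = (B * Bᵀ) * A * (B * Bᵀ) := by rw [hBo']; simp
        _ = B * (Bᵀ * A * B) * Bᵀ := by simp only [Matrix.mul_assoc]
    have hc := aux_conj_pow Bᵀ (diagonal lam) (by rw [transpose_transpose]; exact hBo') k
    rw [transpose_transpose] at hc
    rw [hA', hc, diagonal_pow, trace_mul_cycle, hBo, Matrix.one_mul, trace_diagonal]
    simp
  have hmain : F A = eval lam gh := by
    have hv : (fun i => lam i - (n:ℝ)⁻¹ * ∑ j, lam j) = lam := by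
      funext i; rw [hsum]; ring
    rw [hgheval, hv, hFA]
  rw [hmain, hR, aux_eval_aeval, aux_eval_aeval]
  have hfin : (fun i : Fin n => eval lam (psum (Fin n) ℝ ((i : ℕ) + 1)))
      = fun i : Fin n => eval (fun j : Fin (n - 1) => (A ^ ((j : ℕ) + 2)).trace)
          (if h : (i : ℕ) = 0 then 0
            else X (⟨(i : ℕ) - 1, by have := i.2; omega⟩ : Fin (n - 1))) := by
    funext i
    by_cases h : (i : ℕ) = 0
    · rw [dif_pos h]
      simp only [psum, map_sum, eval_pow, eval_X, map_zero, h]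
      simpa using hsum
    · rw [dif_neg h, eval_X]
      have h2 : (((⟨(i : ℕ) - 1, by have := i.2; omega⟩ : Fin (n - 1)) : ℕ)) + 2
          = (i : ℕ) + 1 := by
        simp only
        omega
      rw [h2, hpow]
      simp [psum]
  exact congrArg (fun f => eval f R) hfin
end

section
/- Let n ≥ 0, let E = EuclideanSpace ℝ (Fin (n+1)), let W = ℝ × E × ℝ, and let Q be the quadratic form Q(λ, x, s) = 2λs + ‖x‖² on W. For any two nonzero vectors v, w ∈ W with Q(v) = 0 and Q(w) = 0, there exists a linear equivalence f : W ≃ W with Q(f(z)) = Q(z) for all z ∈ W and f(v) = w. (Hence the orthogonal group O(1, n+2) of the Minkowski form acts transitively on the nonzero isotropic vectors, and therefore on the projectivized light cone, the conformal sphere.) -/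
open scoped RealInnerProductSpace

/-- The Minkowski quadratic form `Q(λ, x, s) = 2λs + ‖x‖²` on `W = ℝ × E × ℝ`. -/
noncomputable def minkQ10 (n : ℕ) (w : ℝ × EuclideanSpace ℝ (Fin (n + 1)) × ℝ) : ℝ :=
  2 * w.1 * w.2.2 + ‖w.2.1‖ ^ 2

noncomputable def Tmap (n : ℕ) (a : EuclideanSpace ℝ (Fin (n + 1))) :
    (ℝ × EuclideanSpace ℝ (Fin (n + 1)) × ℝ) ≃ₗ[ℝ]
      (ℝ × EuclideanSpace ℝ (Fin (n + 1)) × ℝ) where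
  toFun z := (z.1, z.2.1 + z.1 • a, z.2.2 - ⟪a, z.2.1⟫ - z.1 * (‖a‖ ^ 2 / 2))
  invFun z := (z.1, z.2.1 - z.1 • a, z.2.2 + ⟪a, z.2.1⟫ - z.1 * (‖a‖ ^ 2 / 2))
  map_add' x y := by
    obtain ⟨l, u, s⟩ := x; obtain ⟨m, v, t⟩ := y
    refine Prod.ext rfl (Prod.ext ?_ ?_)
    · show (u + v) + (l + m) • a = (u + l • a) + (v + m • a)
      module
    · show (s + t) - ⟪a, u + v⟫ - (l + m) * (‖a‖ ^ 2 / 2) =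
        (s - ⟪a, u⟫ - l * (‖a‖ ^ 2 / 2)) + (t - ⟪a, v⟫ - m * (‖a‖ ^ 2 / 2))
      rw [inner_add_right]; ring
  map_smul' c z := by
    obtain ⟨l, u, s⟩ := z
    refine Prod.ext rfl (Prod.ext ?_ ?_)
    · show (c • u) + (c * l) • a = c • (u + l • a)
      module
    · show (c * s) - ⟪a, c • u⟫ - (c * l) * (‖a‖ ^ 2 / 2) =
        c * (s - ⟪a, u⟫ - l * (‖a‖ ^ 2 / 2))
      rw [real_inner_smul_right]; ring
  left_inv z := by
    obtain ⟨l, u, s⟩ := z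
    refine Prod.ext rfl (Prod.ext ?_ ?_)
    · show (u + l • a) - l • a = u
      module
    · show (s - ⟪a, u⟫ - l * (‖a‖ ^ 2 / 2)) + ⟪a, u + l • a⟫ - l * (‖a‖ ^ 2 / 2) = s
      rw [inner_add_right, real_inner_smul_right, real_inner_self_eq_norm_sq]
      ring
  right_inv z := by
    obtain ⟨l, u, s⟩ := z
    refine Prod.ext rfl (Prod.ext ?_ ?_)
    · show (u - l • a) + l • a = u
      module
    · show (s + ⟪a, u⟫ - l * (‖a‖ ^ 2 / 2)) - ⟪a, u - l • a⟫ - l * (‖a‖ ^ 2 / 2) = s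
      rw [inner_sub_right, real_inner_smul_right, real_inner_self_eq_norm_sq]
      ring

lemma Tmap_Q (n : ℕ) (a : EuclideanSpace ℝ (Fin (n + 1)))
    (z : ℝ × EuclideanSpace ℝ (Fin (n + 1)) × ℝ) :
    minkQ10 n (Tmap n a z) = minkQ10 n z := by
  obtain ⟨l, u, s⟩ := z
  show 2 * l * (s - ⟪a, u⟫ - l * (‖a‖ ^ 2 / 2)) + ‖u + l • a‖ ^ 2 = 2 * l * s + ‖u‖ ^ 2
  rw [norm_add_sq_real, real_inner_smul_right, norm_smul, real_inner_comm]
  rw [mul_pow, Real.norm_eq_abs, sq_abs]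
  ring

noncomputable def Dmap (n : ℕ) (t : ℝ) (ht : t ≠ 0) :
    (ℝ × EuclideanSpace ℝ (Fin (n + 1)) × ℝ) ≃ₗ[ℝ]
      (ℝ × EuclideanSpace ℝ (Fin (n + 1)) × ℝ) where
  toFun z := (t * z.1, z.2.1, t⁻¹ * z.2.2)
  invFun z := (t⁻¹ * z.1, z.2.1, t * z.2.2)
  map_add' x y := by
    refine Prod.ext ?_ (Prod.ext rfl ?_) <;> show _ = _ <;> simp [mul_add]
  map_smul' c z := by
    refine Prod.ext ?_ (Prod.ext rfl ?_) <;>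
      simp only [Prod.smul_fst, Prod.smul_snd, smul_eq_mul, RingHom.id_apply] <;> ring
  left_inv z := by
    refine Prod.ext ?_ (Prod.ext rfl ?_) <;>
      simp only [] <;> field_simp
  right_inv z := by
    refine Prod.ext ?_ (Prod.ext rfl ?_) <;>
      simp only [] <;> field_simp

lemma Dmap_Q (n : ℕ) (t : ℝ) (ht : t ≠ 0)
    (z : ℝ × EuclideanSpace ℝ (Fin (n + 1)) × ℝ) :
    minkQ10 n (Dmap n t ht z) = minkQ10 n z := by
  obtain ⟨l, u, s⟩ := z
  show 2 * (t * l) * (t⁻¹ * s) + ‖u‖ ^ 2 = 2 * l * s + ‖u‖ ^ 2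
  field_simp

noncomputable def Smap (n : ℕ) :
    (ℝ × EuclideanSpace ℝ (Fin (n + 1)) × ℝ) ≃ₗ[ℝ]
      (ℝ × EuclideanSpace ℝ (Fin (n + 1)) × ℝ) where
  toFun z := (z.2.2, z.2.1, z.1)
  invFun z := (z.2.2, z.2.1, z.1)
  map_add' x y := rfl
  map_smul' c x := rfl
  left_inv z := rfl
  right_inv z := rfl

lemma Smap_Q (n : ℕ) (z : ℝ × EuclideanSpace ℝ (Fin (n + 1)) × ℝ) :
    minkQ10 n (Smap n z) = minkQ10 n z := by
  obtain ⟨l, u, s⟩ := z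
  show 2 * s * l + ‖u‖ ^ 2 = 2 * l * s + ‖u‖ ^ 2
  ring

lemma key (n : ℕ) (v : ℝ × EuclideanSpace ℝ (Fin (n + 1)) × ℝ)
    (hv : v ≠ 0) (hQv : minkQ10 n v = 0) :
    ∃ f : (ℝ × EuclideanSpace ℝ (Fin (n + 1)) × ℝ) ≃ₗ[ℝ]
        (ℝ × EuclideanSpace ℝ (Fin (n + 1)) × ℝ),
      (∀ z, minkQ10 n (f z) = minkQ10 n z) ∧ f (1, 0, 0) = v := by
  obtain ⟨l, x, s⟩ := v
  simp only [minkQ10] at hQv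
  by_cases hl : l = 0
  · subst hl
    have hx : x = 0 := by
      have h1 : ‖x‖ ^ 2 = 0 := by simpa using hQv
      have : ‖x‖ = 0 := by
        nlinarith [norm_nonneg x]
      simpa using this
    subst hx
    have hs : s ≠ 0 := by
      rintro rfl; exact hv rfl
    refine ⟨(Dmap n s hs).trans (Smap n), fun z => ?_, ?_⟩
    · rw [LinearEquiv.trans_apply, Smap_Q, Dmap_Q]
    · rw [LinearEquiv.trans_apply]
      show ((Smap n) ((s * 1 : ℝ), (0 : EuclideanSpace ℝ (Fin (n+1))), (s⁻¹ * 0 : ℝ)))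
        = ((0 : ℝ), (0 : EuclideanSpace ℝ (Fin (n+1))), s)
      show ((s⁻¹ * 0 : ℝ), (0 : EuclideanSpace ℝ (Fin (n+1))), (s * 1 : ℝ))
        = ((0 : ℝ), (0 : EuclideanSpace ℝ (Fin (n+1))), s)
      rw [mul_zero, mul_one]
  · refine ⟨(Dmap n l hl).trans (Tmap n (l⁻¹ • x)), fun z => ?_, ?_⟩
    · rw [LinearEquiv.trans_apply, Tmap_Q, Dmap_Q]
    · rw [LinearEquiv.trans_apply]
      set a : EuclideanSpace ℝ (Fin (n+1)) := l⁻¹ • x with ha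
      show ((l * 1 : ℝ),
          ((0 : EuclideanSpace ℝ (Fin (n+1))) + (l * 1) • a),
          ((l⁻¹ * 0 : ℝ) - ⟪a, (0 : EuclideanSpace ℝ (Fin (n+1)))⟫ - (l * 1) * (‖a‖ ^ 2 / 2)))
        = (l, x, s)
      refine Prod.ext (mul_one l) (Prod.ext ?_ ?_)
      · show (0 : EuclideanSpace ℝ (Fin (n+1))) + (l * 1) • (l⁻¹ • x) = x
        rw [zero_add, mul_one, smul_smul, mul_inv_cancel₀ hl, one_smul]
      · show (l⁻¹ * 0 : ℝ) - ⟪a, (0 : EuclideanSpace ℝ (Fin (n+1)))⟫ - (l * 1) * (‖a‖ ^ 2 / 2) = s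
        rw [inner_zero_right, mul_zero, mul_one, ha, norm_smul, mul_pow, Real.norm_eq_abs,
          sq_abs]
        have hl2 : l ^ 2 ≠ 0 := pow_ne_zero 2 hl
        field_simp
        linear_combination -hQv

/-- the orthogonal group of the Minkowski form acts transitively on
nonzero isotropic vectors. -/
theorem stmt_10 (n : ℕ) (v w : ℝ × EuclideanSpace ℝ (Fin (n + 1)) × ℝ)
    (hv : v ≠ 0) (hw : w ≠ 0) (hQv : minkQ10 n v = 0) (hQw : minkQ10 n w = 0) :
    ∃ f : (ℝ × EuclideanSpace ℝ (Fin (n + 1)) × ℝ) ≃ₗ[ℝ]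
        (ℝ × EuclideanSpace ℝ (Fin (n + 1)) × ℝ),
      (∀ z : ℝ × EuclideanSpace ℝ (Fin (n + 1)) × ℝ, minkQ10 n (f z) = minkQ10 n z) ∧
      f v = w := by
  obtain ⟨fv, hfvQ, hfv⟩ := key n v hv hQv
  obtain ⟨fw, hfwQ, hfw⟩ := key n w hw hQw
  refine ⟨fv.symm.trans fw, fun z => ?_, ?_⟩
  · rw [LinearEquiv.trans_apply, hfwQ]
    conv_rhs => rw [← fv.apply_symm_apply z]
    rw [hfvQ]
  · rw [LinearEquiv.trans_apply, ← hfv, fv.symm_apply_apply, hfw]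
end
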